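/- Let V be a finite-dimensional real vector space, B : V → V* a linear map with B(v)(v) = 0 for all v ∈ V, and let e^B_ℂ : 𝕋_ℂ V → 𝕋_ℂ V be the complexification of the B-transform e^B(v, α) = (v, α + B(v)). If E ⊆ 𝕋_ℂ V is a maximal isotropic complex subspace with E ∩ σ(E) = 0, then e^B_ℂ(E) is again maximal isotropic, satisfies e^B_ℂ(E) ∩ σ(e^B_ℂ(E)) = 0, and π(e^B_ℂ(E)) = π(E), where π : 𝕋_ℂ V → ℂ ⊗_ℝ V is the projection onto the first summand (so B-transforms preserve the type, the codimension of π(E) in ℂ ⊗_ℝ V). -/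

import Mathlib

open TensorProduct

noncomputable section

/-- The generalized tangent space `𝕋V = V ⊕ V*`, where `V* = Hom_ℝ(V, ℝ)`. -/
abbrev GTan (V : Type*) [AddCommGroup V] [Module ℝ V] := V × (V →ₗ[ℝ] ℝ)

/-- The standard pairing `⟨(u,α),(v,β)⟩ = (α(v)+β(u))/2` on `𝕋V`. -/
def stdPairing (V : Type*) [AddCommGroup V] [Module ℝ V] :
    LinearMap.BilinForm ℝ (GTan V) :=
  LinearMap.mk₂ ℝ (fun x y => (x.2 y.1 + y.2 x.1) / 2)
    (fun x x' y => by simp [LinearMap.add_apply]; ring)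
    (fun c x y => by simp [LinearMap.smul_apply, smul_eq_mul]; ring)
    (fun x y y' => by simp [map_add]; ring)
    (fun c x y => by simp [map_smul, smul_eq_mul]; ring)

/-- The ℂ-bilinear extension of the standard pairing to `𝕋_ℂ V = ℂ ⊗_ℝ 𝕋V`. -/
def stdPairingC (V : Type*) [AddCommGroup V] [Module ℝ V] :
    LinearMap.BilinForm ℂ (ℂ ⊗[ℝ] GTan V) :=
  (stdPairing V).baseChange ℂ

/-- The conjugation `σ` on `𝕋_ℂ V`, induced by complex conjugation on `ℂ`
and the identity on `𝕋V`. -/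
def conjT (V : Type*) [AddCommGroup V] [Module ℝ V] :
    ℂ ⊗[ℝ] GTan V →ₗ[ℝ] ℂ ⊗[ℝ] GTan V :=
  TensorProduct.map Complex.conjAe.toLinearMap LinearMap.id

/-- The `i`-eigenspace `ker (J_ℂ - i·id)` of the complexification `J_ℂ` of `J`. -/
def iEigenspace {V : Type*} [AddCommGroup V] [Module ℝ V] (J : GTan V →ₗ[ℝ] GTan V) :
    Submodule ℂ (ℂ ⊗[ℝ] GTan V) :=
  LinearMap.ker (J.baseChange ℂ -
    (Complex.I • LinearMap.id : ℂ ⊗[ℝ] GTan V →ₗ[ℂ] ℂ ⊗[ℝ] GTan V))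


/-- The `B`-transform `e^B (v, α) = (v, α + B(v))` of `𝕋V` associated to a linear map
`B : V → V*`. -/
def bTransform {V : Type*} [AddCommGroup V] [Module ℝ V] (B : V →ₗ[ℝ] (V →ₗ[ℝ] ℝ)) :
    GTan V →ₗ[ℝ] GTan V :=
  LinearMap.prod (LinearMap.fst ℝ V (V →ₗ[ℝ] ℝ))
    (LinearMap.snd ℝ V (V →ₗ[ℝ] ℝ) + B ∘ₗ LinearMap.fst ℝ V (V →ₗ[ℝ] ℝ))

/-- The projection `π : 𝕋_ℂ V → ℂ ⊗ V` onto the first summand. -/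
def projTanC (V : Type*) [AddCommGroup V] [Module ℝ V] :
    ℂ ⊗[ℝ] GTan V →ₗ[ℂ] ℂ ⊗[ℝ] V :=
  (LinearMap.fst ℝ V (V →ₗ[ℝ] ℝ)).baseChange ℂ


section Aux
variable {V : Type*} [AddCommGroup V] [Module ℝ V]

lemma bTransform_pairing (B : V →ₗ[ℝ] (V →ₗ[ℝ] ℝ)) (hB : ∀ v : V, B v v = 0)
    (x y : GTan V) :
    stdPairing V (bTransform B x) (bTransform B y) = stdPairing V x y := by
  have hpol : B x.1 y.1 + B y.1 x.1 = 0 := by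
    have := hB (x.1 + y.1)
    simp only [map_add, LinearMap.add_apply, hB x.1, hB y.1] at this
    linarith
  simp only [stdPairing, bTransform, LinearMap.mk₂_apply, LinearMap.prod_apply,
    Function.prod, LinearMap.add_apply, LinearMap.coe_comp, Function.comp_apply,
    LinearMap.fst_apply, LinearMap.snd_apply]
  linarith

lemma bTransform_comp_neg (B : V →ₗ[ℝ] (V →ₗ[ℝ] ℝ)) :
    (bTransform B) ∘ₗ (bTransform (-B)) = LinearMap.id := by
  ext x <;> simp [bTransform]

/-- The `B`-transform as a linear equivalence. -/
def bTransformEquivC (B : V →ₗ[ℝ] (V →ₗ[ℝ] ℝ)) :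
    (ℂ ⊗[ℝ] GTan V) ≃ₗ[ℂ] (ℂ ⊗[ℝ] GTan V) :=
  LinearEquiv.ofLinear ((bTransform B).baseChange ℂ) ((bTransform (-B)).baseChange ℂ)
    (by rw [← LinearMap.baseChange_comp, bTransform_comp_neg, LinearMap.baseChange_id])
    (by rw [← LinearMap.baseChange_comp]
        rw [show (bTransform (-B)) ∘ₗ (bTransform B) = LinearMap.id by
          ext x <;> simp [bTransform]]
        rw [LinearMap.baseChange_id])

lemma bTransform_pairingC (B : V →ₗ[ℝ] (V →ₗ[ℝ] ℝ)) (hB : ∀ v : V, B v v = 0)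
    (x y : ℂ ⊗[ℝ] GTan V) :
    stdPairingC V ((bTransform B).baseChange ℂ x) ((bTransform B).baseChange ℂ y)
      = stdPairingC V x y := by
  induction x with
  | zero => simp
  | add x₁ x₂ h₁ h₂ => simp [map_add, LinearMap.add_apply, h₁, h₂]
  | tmul a u =>
    induction y with
    | zero => simp
    | add y₁ y₂ h₁ h₂ => simp only [map_add] at h₁ h₂ ⊢; rw [h₁, h₂]
    | tmul b v =>
      simp only [LinearMap.baseChange_tmul, stdPairingC,
        LinearMap.BilinForm.baseChange_tmul, bTransform_pairing B hB]

lemma conjT_baseChange (f : GTan V →ₗ[ℝ] GTan V) (x : ℂ ⊗[ℝ] GTan V) :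
    conjT V ((f.baseChange ℂ) x) = (f.baseChange ℂ) (conjT V x) := by
  induction x with
  | zero => simp
  | add x₁ x₂ h₁ h₂ => simp [map_add, h₁, h₂]
  | tmul a u => simp [conjT]

lemma proj_bTransform (B : V →ₗ[ℝ] (V →ₗ[ℝ] ℝ)) :
    (projTanC V) ∘ₗ ((bTransform B).baseChange ℂ) = projTanC V := by
  have h : (LinearMap.fst ℝ V (V →ₗ[ℝ] ℝ)) ∘ₗ bTransform B
      = LinearMap.fst ℝ V (V →ₗ[ℝ] ℝ) := rfl
  rw [projTanC, ← LinearMap.baseChange_comp, h]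

end Aux

/-- If `E ⊆ 𝕋_ℂ V` is maximal isotropic with `E ∩ σ(E) = 0` and `B : V → V*` is
alternating, then the image of `E` under the complexified `B`-transform `e^B_ℂ` is
again maximal isotropic, satisfies `e^B_ℂ(E) ∩ σ(e^B_ℂ(E)) = 0`, and has the same
projection to `ℂ ⊗ V` as `E` (so `B`-transforms preserve the type). -/
theorem bTransform_of_maximal_isotropic
    (V : Type*) [AddCommGroup V] [Module ℝ V] [FiniteDimensional ℝ V]
    (B : V →ₗ[ℝ] (V →ₗ[ℝ] ℝ)) (hB : ∀ v : V, B v v = 0)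
    (E : Submodule ℂ (ℂ ⊗[ℝ] GTan V))
    (hiso : ∀ x ∈ E, ∀ y ∈ E, stdPairingC V x y = 0)
    (hdim : Module.finrank ℂ E = Module.finrank ℝ V)
    (hconj : ∀ x ∈ E, conjT V x ∈ E → x = 0) :
    (∀ x ∈ E.map ((bTransform B).baseChange ℂ), ∀ y ∈ E.map ((bTransform B).baseChange ℂ),
      stdPairingC V x y = 0) ∧
    Module.finrank ℂ (E.map ((bTransform B).baseChange ℂ)) = Module.finrank ℝ V ∧
    (∀ x ∈ E.map ((bTransform B).baseChange ℂ),
      conjT V x ∈ E.map ((bTransform B).baseChange ℂ) → x = 0) ∧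
    (E.map ((bTransform B).baseChange ℂ)).map (projTanC V) = E.map (projTanC V) := by
  set f := (bTransform B).baseChange ℂ with hf
  refine ⟨?_, ?_, ?_, ?_⟩
  · rintro x hx y hy
    rcases Submodule.mem_map.mp hx with ⟨x', hx', rfl⟩
    rcases Submodule.mem_map.mp hy with ⟨y', hy', rfl⟩
    rw [hf, bTransform_pairingC B hB]
    exact hiso x' hx' y' hy'
  · rw [show E.map f = E.map (bTransformEquivC B).toLinearMap from rfl,
      LinearEquiv.finrank_map_eq]
    exact hdim
  · rintro x hx hcx
    rcases Submodule.mem_map.mp hx with ⟨x', hx', rfl⟩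
    rcases Submodule.mem_map.mp hcx with ⟨y', hy', hy⟩
    have : conjT V x' ∈ E := by
      have hinj : Function.Injective f := (bTransformEquivC B).injective
      have : f (conjT V x') = f y' := by
        rw [hf, ← conjT_baseChange, hy]
      rw [hinj this]; exact hy'
    rw [hconj x' hx' this, map_zero]
  · rw [← Submodule.map_comp, proj_bTransform]
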